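/- Let m ≥ 1, let F : ℝ^m → ℝ be C¹ and homogeneous of degree 6, and set f = ∇F. Then there exists ζ ∈ ℝ^m with ζ ≠ 0 and f(ζ) = ζ if and only if there exists u ∈ ℝ^m with F(u) > 0. Moreover, if ω ∈ ℝ^m with |ω| = 1 satisfies F(ω) = max_{|u|=1} F(u) and F(ω) > 0, then ζ = (6 F(ω))^{−1/4} ω satisfies f(ζ) = ζ. -/

import Mathlib

open InnerProductSpace

section aux

variable {E : Type*} [NormedAddCommGroup E] [InnerProductSpace ℝ E] [CompleteSpace E]

/-- Euler identity for a degree-6 homogeneous `C¹` function. -/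
lemma stmt11_euler (F : E → ℝ) (hF : Differentiable ℝ F)
    (hhom : ∀ c : ℝ, 0 ≤ c → ∀ x, F (c • x) = c ^ 6 * F x) (u : E) :
    fderiv ℝ F u u = 6 * F u := by
  have h1 : HasDerivAt (fun t : ℝ => F (t • u)) (fderiv ℝ F u u) 1 := by
    have := (hF (1 • u)).hasFDerivAt.comp_hasDerivAt (1 : ℝ)
      ((hasDerivAt_id (1 : ℝ)).smul_const u)
    rw [one_smul] at this; exact this
  have h2 : HasDerivAt (fun t : ℝ => t ^ 6 * F u) (6 * F u) 1 := by
    simpa using (hasDerivAt_pow 6 (1 : ℝ)).mul_const (F u)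
  have heq : (fun t : ℝ => t ^ 6 * F u) =ᶠ[nhds 1] fun t : ℝ => F (t • u) := by
    filter_upwards [eventually_gt_nhds one_pos] with t ht
    exact (hhom t ht.le u).symm
  exact h1.unique (h2.congr_of_eventuallyEq heq.symm)

/-- Scaling of the gradient of a degree-6 homogeneous function. -/
lemma stmt11_scal (F : E → ℝ) (hF : Differentiable ℝ F)
    (hhom : ∀ c : ℝ, 0 ≤ c → ∀ x, F (c • x) = c ^ 6 * F x)
    {c : ℝ} (hc : 0 < c) (x : E) :
    gradient F (c • x) = c ^ 5 • gradient F x := by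
  have h1 : HasFDerivAt (fun y : E => F (c • y))
      ((fderiv ℝ F (c • x)).comp (c • ContinuousLinearMap.id ℝ E)) x := by
    exact (hF (c • x)).hasFDerivAt.comp x ((hasFDerivAt_id x).const_smul c)
  have h2 : HasFDerivAt (fun y : E => c ^ 6 * F y) ((c ^ 6) • fderiv ℝ F x) x :=
    (hF x).hasFDerivAt.const_mul _
  have h3 : (fun y : E => F (c • y)) = fun y : E => c ^ 6 * F y :=
    funext fun y => hhom c hc.le y
  rw [h3] at h1
  have h4 := h1.unique h2
  have h5 : fderiv ℝ F (c • x) = c ^ 5 • fderiv ℝ F x := by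
    ext v
    have hv := congrFun (congrArg (fun (L : E →L[ℝ] ℝ) => (L : E → ℝ)) h4) v
    simp only [ContinuousLinearMap.coe_comp', Function.comp_apply,
      ContinuousLinearMap.coe_smul', Pi.smul_apply, ContinuousLinearMap.coe_id', id_eq,
      smul_eq_mul, map_smul] at hv ⊢
    have : c * fderiv ℝ F (c • x) v = c * (c ^ 5 * fderiv ℝ F x v) := by
      rw [hv]; ring
    exact mul_left_cancel₀ hc.ne' this
  unfold gradient
  rw [h5, map_smul]

/-- At a maximizer of a homogeneous function on the unit sphere, the gradient is
`6 F(ω) • ω`. -/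
lemma stmt11_grad_max (F : E → ℝ) (hF : Differentiable ℝ F)
    (hhom : ∀ c : ℝ, 0 ≤ c → ∀ x, F (c • x) = c ^ 6 * F x)
    (ω : E) (hω : ‖ω‖ = 1) (hmax : ∀ u : E, ‖u‖ = 1 → F u ≤ F ω) :
    gradient F ω = (6 * F ω) • ω := by
  have hF0 : F 0 = 0 := by
    have := hhom 0 le_rfl 0
    simpa using this
  -- the auxiliary function G has a global maximum at ω
  set G : E → ℝ := fun u => F u - F ω * (‖u‖ ^ 2) ^ 3 with hG
  have hGle : ∀ u : E, G u ≤ G ω := by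
    have hGω : G ω = 0 := by simp [hG, hω]
    intro u
    rw [hGω]
    simp only [hG]
    by_cases hu : u = 0
    · simp [hu, hF0]
    · have hn : (0 : ℝ) < ‖u‖ := norm_pos_iff.mpr hu
      have hunit : ‖(‖u‖⁻¹ : ℝ) • u‖ = 1 := by
        rw [norm_smul, Real.norm_eq_abs, abs_inv, abs_of_pos hn, inv_mul_cancel₀ hn.ne']
      have h1 : F u = ‖u‖ ^ 6 * F ((‖u‖⁻¹ : ℝ) • u) := by
        have := hhom ‖u‖ (norm_nonneg u) ((‖u‖⁻¹ : ℝ) • u)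
        rwa [smul_inv_smul₀ hn.ne'] at this
      have h2 : F ((‖u‖⁻¹ : ℝ) • u) ≤ F ω := hmax _ hunit
      have h3 : F u ≤ ‖u‖ ^ 6 * F ω := by
        rw [h1]
        exact mul_le_mul_of_nonneg_left h2 (by positivity)
      have h4 : (‖u‖ ^ 2) ^ 3 = ‖u‖ ^ 6 := by ring
      show F u - F ω * (‖u‖ ^ 2) ^ 3 ≤ 0
      rw [h4]; linarith [h3]
  have hloc : IsLocalMax G ω := Filter.Eventually.of_forall hGle
  -- differentiability of G
  have hNd : HasFDerivAt (fun u : E => (‖u‖ ^ 2) ^ 3)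
      ((3 * ((‖ω‖ ^ 2) ^ 2)) • (2 • innerSL ℝ ω)) ω := by
    have hg : HasDerivAt (fun t : ℝ => t ^ 3) (3 * ((‖ω‖ ^ 2) ^ 2)) (‖ω‖ ^ 2) := by
      simpa using hasDerivAt_pow 3 (‖ω‖ ^ 2)
    exact hg.comp_hasFDerivAt ω (hasStrictFDerivAt_norm_sq ω).hasFDerivAt
  have hGd : HasFDerivAt G
      (fderiv ℝ F ω - F ω • ((3 * ((‖ω‖ ^ 2) ^ 2)) • (2 • innerSL ℝ ω))) ω :=
    (hF ω).hasFDerivAt.sub (hNd.const_mul (F ω))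
  have hzero := hloc.hasFDerivAt_eq_zero hGd
  have hfd : fderiv ℝ F ω = F ω • ((3 * ((‖ω‖ ^ 2) ^ 2)) • (2 • innerSL ℝ ω)) := by
    have := sub_eq_zero.mp hzero
    exact this
  -- translate to the gradient
  have hfd2 : fderiv ℝ F ω = toDual ℝ E ((6 * F ω) • ω) := by
    rw [hfd]
    ext y
    simp only [toDual_apply_apply, hω, one_pow, mul_one, ContinuousLinearMap.coe_smul',
      Pi.smul_apply, innerSL_apply_apply, smul_eq_mul, real_inner_smul_left]
    ring
  unfold gradient
  rw [hfd2, LinearIsometryEquiv.symm_apply_apply]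

end aux

/-- Finite-dimensional core of Proposition 3.9: for `f = ∇F` with `F` homogeneous of
degree 6, a nonzero fixed point `f(ζ) = ζ` exists iff `F` takes a positive value;
moreover a maximizer `ω` of `F` on the unit sphere with `F(ω) > 0` yields the fixed
point `ζ = (6F(ω))^{-1/4} ω`. -/
theorem stmt11 (m : ℕ) (hm : 1 ≤ m)
    (F : EuclideanSpace ℝ (Fin m) → ℝ) (hF : ContDiff ℝ 1 F)
    (hhom : ∀ c : ℝ, 0 ≤ c → ∀ x, F (c • x) = c ^ 6 * F x) :
    ((∃ ζ : EuclideanSpace ℝ (Fin m), ζ ≠ 0 ∧ gradient F ζ = ζ) ↔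
      ∃ u : EuclideanSpace ℝ (Fin m), 0 < F u) ∧
    ∀ ω : EuclideanSpace ℝ (Fin m), ‖ω‖ = 1 →
      (∀ u : EuclideanSpace ℝ (Fin m), ‖u‖ = 1 → F u ≤ F ω) → 0 < F ω →
      gradient F (((6 * F ω) ^ (-(1:ℝ)/4)) • ω) = ((6 * F ω) ^ (-(1:ℝ)/4)) • ω := by
  have hFd : Differentiable ℝ F := hF.differentiable one_ne_zero
  have hF0 : F 0 = 0 := by simpa using hhom 0 le_rfl 0
  -- the "moreover" part, proved first so it can be reused
  have main : ∀ ω : EuclideanSpace ℝ (Fin m), ‖ω‖ = 1 → (∀ u : EuclideanSpace ℝ (Fin m), ‖u‖ = 1 → F u ≤ F ω) → 0 < F ω →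
      gradient F (((6 * F ω) ^ (-(1:ℝ)/4)) • ω) = ((6 * F ω) ^ (-(1:ℝ)/4)) • ω := by
    intro ω hω hmax hpos
    have h6 : (0 : ℝ) < 6 * F ω := by linarith
    set c : ℝ := (6 * F ω) ^ (-(1:ℝ)/4) with hc
    have hcpos : 0 < c := Real.rpow_pos_of_pos h6 _
    have hc4 : c ^ (4 : ℕ) = (6 * F ω)⁻¹ := by
      rw [hc, ← Real.rpow_natCast ((6 * F ω) ^ (-(1:ℝ)/4)) 4, ← Real.rpow_mul h6.le,
        show (-(1:ℝ)/4 * (4:ℕ)) = -1 by norm_num, Real.rpow_neg_one]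
    have hgrad : gradient F ω = (6 * F ω) • ω := stmt11_grad_max F hFd hhom ω hω hmax
    rw [stmt11_scal F hFd hhom hcpos ω, hgrad, smul_smul]
    congr 1
    have : c ^ 5 = c * c ^ (4 : ℕ) := by ring
    rw [this, hc4, mul_assoc, inv_mul_cancel₀ h6.ne', mul_one]
  refine ⟨⟨?_, ?_⟩, main⟩
  · rintro ⟨ζ, hζ0, hζ⟩
    refine ⟨ζ, ?_⟩
    have heuler := stmt11_euler F hFd hhom ζ
    have hinner : (inner ℝ (gradient F ζ) ζ : ℝ) = fderiv ℝ F ζ ζ := by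
      unfold gradient
      rw [← toDual_apply_apply (𝕜 := ℝ), LinearIsometryEquiv.apply_symm_apply]
    rw [hζ, real_inner_self_eq_norm_sq] at hinner
    have hn : (0 : ℝ) < ‖ζ‖ ^ 2 := pow_pos (norm_pos_iff.mpr hζ0) 2
    nlinarith [hinner, heuler]
  · rintro ⟨u, hu⟩
    -- the unit sphere is nonempty and compact; take a maximizer of F on it
    have hne : (Metric.sphere (0 : EuclideanSpace ℝ (Fin m)) 1).Nonempty := by
      refine ⟨EuclideanSpace.single ⟨0, hm⟩ (1 : ℝ), ?_⟩
      rw [mem_sphere_zero_iff_norm, EuclideanSpace.norm_single]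
      norm_num
    obtain ⟨ω, hωs, hωmax⟩ := (isCompact_sphere (0 : EuclideanSpace ℝ (Fin m)) 1).exists_isMaxOn hne
      (hF.continuous.continuousOn)
    rw [mem_sphere_zero_iff_norm] at hωs
    have hmax : ∀ v : EuclideanSpace ℝ (Fin m), ‖v‖ = 1 → F v ≤ F ω := fun v hv =>
      hωmax (mem_sphere_zero_iff_norm.mpr hv)
    have hu0 : u ≠ 0 := by rintro rfl; rw [hF0] at hu; exact lt_irrefl 0 hu
    have hnu : (0 : ℝ) < ‖u‖ := norm_pos_iff.mpr hu0
    have hunit : ‖(‖u‖⁻¹ : ℝ) • u‖ = 1 := by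
      rw [norm_smul, Real.norm_eq_abs, abs_inv, abs_of_pos hnu, inv_mul_cancel₀ hnu.ne']
    have hFω : 0 < F ω := by
      have h1 : F ((‖u‖⁻¹ : ℝ) • u) = (‖u‖⁻¹) ^ 6 * F u :=
        hhom _ (inv_nonneg.mpr hnu.le) u
      have h2 : 0 < (‖u‖⁻¹) ^ 6 * F u := mul_pos (by positivity) hu
      have h3 := hmax _ hunit
      linarith [h1 ▸ h3]
    have h6 : (0 : ℝ) < 6 * F ω := by linarith
    refine ⟨((6 * F ω) ^ (-(1:ℝ)/4)) • ω, ?_, main ω hωs hmax hFω⟩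
    have hcpos : 0 < (6 * F ω) ^ (-(1:ℝ)/4) := Real.rpow_pos_of_pos h6 _
    have hω0 : ω ≠ 0 := by
      intro h; rw [h, norm_zero] at hωs; norm_num at hωs
    exact smul_ne_zero hcpos.ne' hω0
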